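/- Let α be a 2-cocycle on D₁ (as above). Then for all x, z ∈ A: ∂(x−z)·α(L(x+z), I(−x−z)) = ∂(x+z)·(α(L(x), I(−x)) − α(L(z), I(−z))). -/
import Mathlib


/-- For any 2-cocycle `α` on `D₁`:
`∂(x−z)·α(L(x+z), I(−x−z)) = ∂(x+z)·(α(L x, I(−x)) − α(L z, I(−z)))`. -/
theorem stmt_9 {F : Type*} [Field F] [CharZero F]
    {A : Type*} [AddCommGroup A]
    (d : A →+ F) (hd : ∀ x : A, d x = 0 → x = 0)
    {D : Type*} [LieRing D] [LieAlgebra F D]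
    (L I : A → D)
    (hLL : ∀ x y : A, ⁅L x, L y⁆ = d (y - x) • L (x + y))
    (hLI : ∀ x y : A, ⁅L x, I y⁆ = d y • I (x + y))
    (hII : ∀ x y : A, ⁅I x, I y⁆ = 0)
    (α : D →ₗ[F] D →ₗ[F] F)
    (hAlt : ∀ u : D, α u u = 0)
    (hCoc : ∀ u v w : D, α ⁅u, v⁆ w + α ⁅v, w⁆ u + α ⁅w, u⁆ v = 0) :
    ∀ x z : A,
      d (x - z) * α (L (x + z)) (I (-(x + z))) =
        d (x + z) * (α (L x) (I (-x)) - α (L z) (I (-z))) := by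
  have skew : ∀ u v : D, α u v = - α v u := by
    intro u v
    have h := hAlt (u + v)
    simp only [map_add, LinearMap.add_apply, hAlt] at h
    linear_combination h
  intro x z
  have h := hCoc (L x) (L z) (I (-(x + z)))
  have h1 : ⁅L x, L z⁆ = d (z - x) • L (x + z) := hLL x z
  have h2 : ⁅L z, I (-(x + z))⁆ = (- d (x + z)) • I (-x) := by
    rw [hLI z (-(x + z))]
    have e : z + -(x + z) = -x := by abel
    rw [e, map_neg]
  have h3 : ⁅I (-(x + z)), L x⁆ = d (x + z) • I (-z) := by
    rw [← lie_skew, hLI x (-(x + z))]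
    have e : x + -(x + z) = -z := by abel
    rw [e, map_neg, neg_smul, neg_neg]
  rw [h1, h2, h3] at h
  simp only [map_smul, LinearMap.smul_apply, smul_eq_mul] at h
  have s1 := skew (I (-x)) (L x)
  have s2 := skew (I (-z)) (L z)
  have e1 : (d (x - z) : F) = d x - d z := by rw [map_sub]
  have e2 : (d (z - x) : F) = d z - d x := by rw [map_sub]
  rw [s1, s2, e2] at h
  rw [e1]
  linear_combination -h
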